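/- Let D be a design of strength R−1 (R ≥ 2) with n ≥ R factors, each factor given a normalized orthogonal coding. Let U be an R-element set of factors, s_min = min_{i∈U} s i, c ∈ U a factor with s c = s_min, and C = U ∖ {c}. Let X_C denote the (R−1)-factor interaction model matrix of the factors in C, with d columns. If a_R(U) = s_min − 1, then there exists an orthogonal d × d real matrix Q such that s_min − 1 of the columns of X_C · Q are exactly the s_min − 1 columns of the main-effects model matrix X_c. -/

import Mathlib

open Finset Matrix

/-- A design `D` (rows = runs, coordinates = factors) has strength `t` if in every
projection onto `t` factors every level combination occurs equally often. -/
def hasStrength {N n : ℕ} (s : Fin n → ℕ) (D : Fin N → ∀ i, Fin (s i)) (t : ℕ) : Prop :=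
  ∀ T : Finset (Fin n), T.card = t → ∀ x : ∀ i, Fin (s i),
    (Finset.univ.filter fun r => ∀ i ∈ T, D r i = x i).card = N / ∏ i ∈ T, s i

/-- Normalized orthogonal coding: contrast columns have zero sum and
`Cᵀ C = m • 1` (squared length `m`, pairwise orthogonal). -/
def isNOC {m : ℕ} (C : Fin m → Fin (m - 1) → ℝ) : Prop :=
  (∀ j, ∑ l, C l j = 0) ∧
    ∀ j j', ∑ l, C l j * C l j' = if j = j' then (m : ℝ) else 0

/-- Column (indexed by the tuple `j`) of the interaction model matrix of the set `U`
of factors, evaluated at run `r`. -/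
def intCol {N n : ℕ} {s : Fin n → ℕ} (C : ∀ i, Fin (s i) → Fin (s i - 1) → ℝ)
    (D : Fin N → ∀ i, Fin (s i)) (U : Finset (Fin n))
    (j : ∀ i : U, Fin (s i.1 - 1)) (r : Fin N) : ℝ :=
  ∏ i : U, C i.1 (D r i.1) (j i)

/-- Projection frequency `a_k(U)`: sum of squared column sums of the interaction
model matrix of `U`, divided by `N²`. -/
noncomputable def projFreq {N n : ℕ} {s : Fin n → ℕ}
    (C : ∀ i, Fin (s i) → Fin (s i - 1) → ℝ)
    (D : Fin N → ∀ i, Fin (s i)) (U : Finset (Fin n)) : ℝ :=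
  (∑ j : ∀ i : U, Fin (s i.1 - 1), (∑ r, intCol C D U j r) ^ 2) / (N : ℝ) ^ 2

lemma count_pattern {N n t : ℕ} {s : Fin n → ℕ} (hs : ∀ i, 2 ≤ s i)
    {D : Fin N → ∀ i, Fin (s i)} (hD : hasStrength s D t)
    {T : Finset (Fin n)} (hT : T.card = t) (y : ∀ i : T, Fin (s i.1)) :
    (Finset.univ.filter fun r => (fun i : T => D r i.1) = y).card = N / ∏ i ∈ T, s i := by
  classical
  set x : ∀ i, Fin (s i) := fun i => if h : i ∈ T then y ⟨i, h⟩ else ⟨0, by have := hs i; omega⟩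
    with hx
  have := hD T hT x
  rw [← this]
  congr 1
  apply Finset.filter_congr
  intro r _
  constructor
  · intro h
    intro i hi
    have := congrFun h ⟨i, hi⟩
    simp only [hx, dif_pos hi]
    exact this
  · intro h
    funext i
    have := h i.1 i.2
    simpa only [hx, dif_pos i.2] using this

lemma keysum {N n t : ℕ} {s : Fin n → ℕ} (hs : ∀ i, 2 ≤ s i)
    {D : Fin N → ∀ i, Fin (s i)} (hD : hasStrength s D t)
    {T : Finset (Fin n)} (hT : T.card = t) (F : ∀ i : T, Fin (s i.1) → ℝ) :
    ∑ r, ∏ i : T, F i (D r i.1)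
      = ((N / ∏ i ∈ T, s i : ℕ) : ℝ) * ∏ i : T, (∑ l, F i l) := by
  classical
  have h1 : ∑ r : Fin N, ∏ i : T, F i (D r i.1)
      = ∑ y : (∀ i : T, Fin (s i.1)), ∑ r ∈ Finset.univ.filter
          (fun r => (fun i : T => D r i.1) = y), ∏ i : T, F i (D r i.1) := by
    rw [Finset.sum_fiberwise]
  rw [h1]
  have h2 : ∀ y : (∀ i : T, Fin (s i.1)),
      ∑ r ∈ Finset.univ.filter (fun r => (fun i : T => D r i.1) = y),
        ∏ i : T, F i (D r i.1)
      = ((N / ∏ i ∈ T, s i : ℕ) : ℝ) * ∏ i : T, F i (y i) := by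
    intro y
    rw [Finset.sum_congr rfl (fun r hr => ?_), Finset.sum_const, count_pattern hs hD hT y,
      nsmul_eq_mul]
    have := (Finset.mem_filter.1 hr).2
    exact Finset.prod_congr rfl fun i _ => by rw [congrFun this i]
  rw [Finset.sum_congr rfl (fun y _ => h2 y), ← Finset.mul_sum, ← Fintype.prod_sum]

lemma keydvd {N n t : ℕ} {s : Fin n → ℕ} (hs : ∀ i, 2 ≤ s i)
    {D : Fin N → ∀ i, Fin (s i)} (hD : hasStrength s D t)
    {T : Finset (Fin n)} (hT : T.card = t) : (∏ i ∈ T, s i) ∣ N := by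
  classical
  have h1 : (Finset.univ : Finset (Fin N)).card
      = ∑ y : (∀ i : T, Fin (s i.1)), (Finset.univ.filter
          (fun r => (fun i : T => D r i.1) = y)).card :=
    Finset.card_eq_sum_card_fiberwise (fun r _ => Finset.mem_univ _)
  simp only [count_pattern hs hD hT, Finset.sum_const, Finset.card_univ, smul_eq_mul] at h1
  rw [Fintype.card_fin] at h1
  have hcard : Fintype.card (∀ i : T, Fin (s i.1)) = ∏ i ∈ T, s i := by
    rw [Fintype.card_pi]
    simp only [Fintype.card_fin]
    exact Finset.prod_coe_sort T s
  rw [hcard] at h1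
  exact Dvd.intro _ h1.symm

lemma divcast {N n : ℕ} {s : Fin n → ℕ} {T : Finset (Fin n)} (h : (∏ i ∈ T, s i) ∣ N) :
    ((N / ∏ i ∈ T, s i : ℕ) : ℝ) * ((∏ i ∈ T, s i : ℕ) : ℝ) = (N : ℝ) := by
  rw [← Nat.cast_mul, Nat.div_mul_cancel h]

lemma gram_inter {N n R : ℕ} {s : Fin n → ℕ} (hs : ∀ i, 2 ≤ s i)
    {D : Fin N → ∀ i, Fin (s i)} (hD : hasStrength s D (R - 1))
    {C : ∀ i, Fin (s i) → Fin (s i - 1) → ℝ} (hC : ∀ i, isNOC (C i))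
    {U : Finset (Fin n)} (hU : U.card = R) {c : Fin n} (hc : c ∈ U)
    (k k' : ∀ i : (U.erase c : Finset (Fin n)), Fin (s i.1 - 1)) :
    ∑ r, intCol C D (U.erase c) k r * intCol C D (U.erase c) k' r
      = if k = k' then (N : ℝ) else 0 := by
  classical
  have hT : (U.erase c).card = R - 1 := by rw [Finset.card_erase_of_mem hc, hU]
  have h1 : ∀ r, intCol C D (U.erase c) k r * intCol C D (U.erase c) k' r
      = ∏ i : (U.erase c : Finset (Fin n)),
          (C i.1 (D r i.1) (k i) * C i.1 (D r i.1) (k' i)) := by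
    intro r; rw [intCol, intCol, ← Finset.prod_mul_distrib]
  rw [Finset.sum_congr rfl (fun r _ => h1 r),
    keysum hs hD hT (fun i l => C i.1 l (k i) * C i.1 l (k' i))]
  have h2 : ∀ i : (U.erase c : Finset (Fin n)),
      ∑ l, C i.1 l (k i) * C i.1 l (k' i) = if k i = k' i then (s i.1 : ℝ) else 0 :=
    fun i => (hC i.1).2 (k i) (k' i)
  rw [Finset.prod_congr rfl (fun i _ => h2 i)]
  by_cases hkk : k = k'
  · subst hkk
    rw [if_pos rfl, Finset.prod_congr rfl (fun i (_ : i ∈ Finset.univ) => if_pos rfl)]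
    have h3 : ∏ i : (U.erase c : Finset (Fin n)), (s i.1 : ℝ)
        = ((∏ i ∈ U.erase c, s i : ℕ) : ℝ) := by
      rw [Nat.cast_prod, Finset.prod_coe_sort (U.erase c) (fun i => (s i : ℝ))]
    rw [h3, divcast (keydvd hs hD hT)]
  · rw [if_neg hkk]
    obtain ⟨i, hi⟩ : ∃ i : (U.erase c : Finset (Fin n)), k i ≠ k' i := by
      by_contra h
      push_neg at h
      exact hkk (funext h)
    have h4 : (∏ i : (U.erase c : Finset (Fin n)), if k i = k' i then (s i.1 : ℝ) else 0) = 0 :=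
      Finset.prod_eq_zero (Finset.mem_univ i) (if_neg hi)
    rw [h4, mul_zero]

lemma gram_main {N n R : ℕ} (hR : 2 ≤ R) {s : Fin n → ℕ} (hs : ∀ i, 2 ≤ s i)
    {D : Fin N → ∀ i, Fin (s i)} (hD : hasStrength s D (R - 1))
    {C : ∀ i, Fin (s i) → Fin (s i - 1) → ℝ} (hC : ∀ i, isNOC (C i))
    {U : Finset (Fin n)} (hU : U.card = R) {c : Fin n} (hc : c ∈ U)
    (j j' : Fin (s c - 1)) :
    ∑ r, C c (D r c) j * C c (D r c) j' = if j = j' then (N : ℝ) else 0 := by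
  classical
  obtain ⟨c', hc'U, hc'⟩ := Finset.exists_mem_ne (by omega : 1 < U.card) c
  have hT : (U.erase c').card = R - 1 := by rw [Finset.card_erase_of_mem hc'U, hU]
  have hcT : c ∈ U.erase c' := Finset.mem_erase.2 ⟨fun h => hc' h.symm, hc⟩
  set φ : ∀ i, Fin (s i) → ℝ :=
    Function.update (fun i (_ : Fin (s i)) => (1 : ℝ)) c (fun l => C c l j * C c l j') with hφ
  have h1 : ∀ r, ∏ i : (U.erase c' : Finset (Fin n)), φ i.1 (D r i.1)
      = C c (D r c) j * C c (D r c) j' := by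
    intro r
    rw [Finset.prod_eq_single_of_mem (⟨c, hcT⟩ : (U.erase c' : Finset (Fin n)))
      (Finset.mem_univ _) (fun b _ hb => ?_)]
    · rw [hφ, Function.update_self]
    · have hbc : b.1 ≠ c := fun h => hb (Subtype.ext h)
      rw [hφ, Function.update_of_ne hbc]
  have h2 := keysum hs hD hT (fun i : (U.erase c' : Finset (Fin n)) => φ i.1)
  rw [Finset.sum_congr rfl (fun r _ => (h1 r).symm), h2]
  set ψ : Fin n → ℝ := fun i => ∑ l, φ i l with hψ
  have h3 : ∏ i : (U.erase c' : Finset (Fin n)), (∑ l, φ i.1 l) = ∏ i ∈ U.erase c', ψ i :=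
    Finset.prod_coe_sort (U.erase c') ψ
  rw [h3, ← Finset.mul_prod_erase (U.erase c') ψ hcT]
  have hψc : ψ c = if j = j' then (s c : ℝ) else 0 := by
    rw [hψ]; simp only [hφ, Function.update_self]; exact (hC c).2 j j'
  have hψo : ∀ i ∈ (U.erase c').erase c, ψ i = (s i : ℝ) := by
    intro i hi
    have hic : i ≠ c := (Finset.mem_erase.1 hi).1
    rw [hψ]; simp only [hφ, Function.update_of_ne hic]
    rw [Finset.sum_const, Finset.card_univ, Fintype.card_fin, nsmul_eq_mul, mul_one]
  rw [Finset.prod_congr rfl hψo, hψc]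
  by_cases hjj : j = j'
  · subst hjj
    rw [if_pos rfl, if_pos rfl]
    have h4 : (s c : ℝ) * ∏ i ∈ (U.erase c').erase c, (s i : ℝ)
        = ((∏ i ∈ U.erase c', s i : ℕ) : ℝ) := by
      rw [Nat.cast_prod, ← Finset.mul_prod_erase (U.erase c') (fun i => (s i : ℝ)) hcT]
    rw [mul_comm ((s c : ℝ)) _, ← mul_assoc, mul_assoc _ _ ((s c : ℝ)), mul_comm _ ((s c : ℝ)),
      ← mul_assoc, mul_assoc]
    rw [h4, divcast (keydvd hs hD hT)]
  · rw [if_neg hjj, if_neg hjj, zero_mul, mul_zero]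

lemma split_sum {N n : ℕ} {s : Fin n → ℕ}
    (C : ∀ i, Fin (s i) → Fin (s i - 1) → ℝ) (D : Fin N → ∀ i, Fin (s i))
    {U : Finset (Fin n)} {c : Fin n} (hc : c ∈ U) (f : ℝ → ℝ) :
    ∑ j : (∀ i : U, Fin (s i.1 - 1)), f (∑ r, intCol C D U j r)
      = ∑ jc : Fin (s c - 1), ∑ k : (∀ i : (U.erase c : Finset (Fin n)), Fin (s i.1 - 1)),
          f (∑ r, C c (D r c) jc * intCol C D (U.erase c) k r) := by
  classical
  set ec : ↥U := ⟨c, hc⟩ with hec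
  let e2 : {j : ↥U // j ≠ ec} ≃ ↥(U.erase c) :=
    { toFun := fun j => ⟨j.1.1, Finset.mem_erase.2 ⟨fun h => j.2 (Subtype.ext h), j.1.2⟩⟩
      invFun := fun i => ⟨⟨i.1, Finset.mem_of_mem_erase i.2⟩,
        fun h => (Finset.mem_erase.1 i.2).1 (congrArg Subtype.val h)⟩
      left_inv := fun j => Subtype.ext (Subtype.ext rfl)
      right_inv := fun i => Subtype.ext rfl }
  let E : (∀ i : U, Fin (s i.1 - 1)) ≃
      (Fin (s c - 1) × ∀ i : (U.erase c : Finset (Fin n)), Fin (s i.1 - 1)) :=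
    (Equiv.piSplitAt ec (fun i : ↥U => Fin (s i.1 - 1))).trans
      (Equiv.prodCongr (Equiv.refl _)
        (Equiv.piCongrLeft' (fun j : {j : ↥U // j ≠ ec} => Fin (s j.1.1 - 1)) e2))
  have hps : ∀ (g : ↥U → ℝ), ∏ i : ↥U, g i
      = g ec * ∏ b : ↥(U.erase c), g ⟨b.1, Finset.mem_of_mem_erase b.2⟩ := by
    intro g
    rw [← Finset.mul_prod_erase Finset.univ g (Finset.mem_univ ec)]
    congr 1
    rw [Finset.prod_subtype (Finset.univ.erase ec) (p := fun j => j ≠ ec)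
      (fun x => by simp [Finset.mem_erase]) g]
    exact Equiv.prod_comp e2
      (fun b : ↥(U.erase c) => g ⟨b.1, Finset.mem_of_mem_erase b.2⟩)
  have hmain : ∀ j : (∀ i : U, Fin (s i.1 - 1)),
      f (∑ r, intCol C D U j r)
        = (fun p : (Fin (s c - 1) × ∀ i : (U.erase c : Finset (Fin n)), Fin (s i.1 - 1)) =>
            f (∑ r, C c (D r c) p.1 * intCol C D (U.erase c) p.2 r)) (E j) := by
    intro j
    simp only
    congr 1
    apply Finset.sum_congr rfl
    intro r _
    exact hps (fun i : ↥U => C i.1 (D r i.1) (j i))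
  rw [Fintype.sum_equiv E _
    (fun p : (Fin (s c - 1) × ∀ i : (U.erase c : Finset (Fin n)), Fin (s i.1 - 1)) =>
      f (∑ r, C c (D r c) p.1 * intCol C D (U.erase c) p.2 r)) hmain,
    Fintype.sum_prod_type]

set_option maxHeartbeats 1000000 in
/-- if `c ∈ U` has the minimum number of levels `s_min` of `U` and
`a_R(U) = s_min - 1`, then the interaction model matrix `X_C` of `C = U \ {c}` can be
orthogonally transformed (by an orthogonal matrix `Q`) so that `s_min - 1` of the
columns of `X_C · Q` are exactly the columns of the main-effects model matrix of `c`. -/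
theorem statement5 {N n R : ℕ} (hN : 1 ≤ N) (hR : 2 ≤ R) (hn : R ≤ n)
    {s : Fin n → ℕ} (hs : ∀ i, 2 ≤ s i)
    (D : Fin N → ∀ i, Fin (s i)) (hD : hasStrength s D (R - 1))
    (C : ∀ i, Fin (s i) → Fin (s i - 1) → ℝ) (hC : ∀ i, isNOC (C i))
    (U : Finset (Fin n)) (hU : U.card = R) (c : Fin n) (hc : c ∈ U)
    (hmin : ∀ k ∈ U, s c ≤ s k)
    (ha : projFreq C D U = (s c : ℝ) - 1) :
    ∃ Q : Matrix (∀ i : (U.erase c : Finset (Fin n)), Fin (s i.1 - 1))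
        (∀ i : (U.erase c : Finset (Fin n)), Fin (s i.1 - 1)) ℝ,
      Qᵀ * Q = 1 ∧
      ∃ e : Fin (s c - 1) → (∀ i : (U.erase c : Finset (Fin n)), Fin (s i.1 - 1)),
        Function.Injective e ∧
        ∀ (j : Fin (s c - 1)) (r : Fin N),
          ((Matrix.of fun r' k => intCol C D (U.erase c) k r') * Q) r (e j)
            = C c (D r c) j := by
  classical
  have hNR : (N : ℝ) ≠ 0 := by positivity
  set G : (∀ i : (U.erase c : Finset (Fin n)), Fin (s i.1 - 1)) → Fin (s c - 1) → ℝ :=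
    fun k jc => ∑ r, intCol C D (U.erase c) k r * C c (D r c) jc with hG
  -- squared norm of G
  have hsum : ∑ jc : Fin (s c - 1),
      ∑ k : (∀ i : (U.erase c : Finset (Fin n)), Fin (s i.1 - 1)), (G k jc) ^ 2
      = ((s c : ℝ) - 1) * (N : ℝ) ^ 2 := by
    have h0 : ∑ j : (∀ i : U, Fin (s i.1 - 1)), (∑ r, intCol C D U j r) ^ 2
        = ((s c : ℝ) - 1) * (N : ℝ) ^ 2 := by
      have := ha
      rw [projFreq, div_eq_iff (by positivity : ((N : ℝ) ^ 2) ≠ 0)] at this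
      exact this
    rw [split_sum C D hc (fun x => x ^ 2)] at h0
    rw [← h0]
    apply Finset.sum_congr rfl
    intro jc _
    apply Finset.sum_congr rfl
    intro k _
    congr 1
    rw [hG]
    exact Finset.sum_congr rfl fun r _ => mul_comm _ _
  -- the key identity  N * X_c = X_C * G
  have hkey : ∀ (r : Fin N) (jc : Fin (s c - 1)),
      ∑ k, intCol C D (U.erase c) k r * G k jc = (N : ℝ) * C c (D r c) jc := by
    have hper : ∀ jc : Fin (s c - 1),
        ∑ r, ((N : ℝ) * C c (D r c) jc - ∑ k, intCol C D (U.erase c) k r * G k jc) ^ 2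
          = (N : ℝ) ^ 3 - (N : ℝ) * ∑ k, (G k jc) ^ 2 := by
      intro jc
      have hA : ∑ r, ((N : ℝ) * C c (D r c) jc) ^ 2 = (N : ℝ) ^ 3 := by
        have h5 : ∑ r, C c (D r c) jc * C c (D r c) jc = (N : ℝ) := by
          rw [gram_main hR hs hD hC hU hc jc jc, if_pos rfl]
        calc ∑ r, ((N : ℝ) * C c (D r c) jc) ^ 2
            = (N : ℝ) ^ 2 * ∑ r, C c (D r c) jc * C c (D r c) jc := by
              rw [Finset.mul_sum]; exact Finset.sum_congr rfl fun r _ => by ring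
          _ = (N : ℝ) ^ 3 := by rw [h5]; ring
      have hAB : ∑ r, ((N : ℝ) * C c (D r c) jc) *
          (∑ k, intCol C D (U.erase c) k r * G k jc)
          = (N : ℝ) * ∑ k, (G k jc) ^ 2 := by
        calc ∑ r, ((N : ℝ) * C c (D r c) jc) * (∑ k, intCol C D (U.erase c) k r * G k jc)
            = (N : ℝ) * ∑ r, ∑ k, (intCol C D (U.erase c) k r * C c (D r c) jc) * G k jc := by
              rw [Finset.mul_sum]
              exact Finset.sum_congr rfl fun r _ => by
                rw [Finset.mul_sum, Finset.mul_sum]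
                exact Finset.sum_congr rfl fun k _ => by ring
          _ = (N : ℝ) * ∑ k, (∑ r, intCol C D (U.erase c) k r * C c (D r c) jc) * G k jc := by
              rw [Finset.sum_comm]
              congr 1
              exact Finset.sum_congr rfl fun k _ => by rw [Finset.sum_mul]
          _ = (N : ℝ) * ∑ k, (G k jc) ^ 2 := by
              congr 1
              refine Finset.sum_congr rfl fun k _ => ?_
              have hgk : (∑ r, intCol C D (U.erase c) k r * C c (D r c) jc) = G k jc := rfl
              rw [hgk, pow_two]
      have hB : ∑ r, (∑ k, intCol C D (U.erase c) k r * G k jc) ^ 2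
          = (N : ℝ) * ∑ k, (G k jc) ^ 2 := by
        have hsq : ∀ r : Fin N, (∑ k, intCol C D (U.erase c) k r * G k jc) ^ 2
            = ∑ k, ∑ k', (G k jc * G k' jc) *
                (intCol C D (U.erase c) k r * intCol C D (U.erase c) k' r) := by
          intro r
          rw [pow_two, Finset.sum_mul_sum]
          exact Finset.sum_congr rfl fun k _ =>
            Finset.sum_congr rfl fun k' _ => by ring
        calc ∑ r, (∑ k, intCol C D (U.erase c) k r * G k jc) ^ 2
            = ∑ r, ∑ k, ∑ k', (G k jc * G k' jc) *
                (intCol C D (U.erase c) k r * intCol C D (U.erase c) k' r) :=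
              Finset.sum_congr rfl fun r _ => hsq r
          _ = ∑ k, ∑ k', (G k jc * G k' jc) *
                ∑ r, intCol C D (U.erase c) k r * intCol C D (U.erase c) k' r := by
              rw [Finset.sum_comm]
              refine Finset.sum_congr rfl fun k _ => ?_
              rw [Finset.sum_comm]
              refine Finset.sum_congr rfl fun k' _ => ?_
              exact (Finset.mul_sum Finset.univ
                (fun r => intCol C D (U.erase c) k r * intCol C D (U.erase c) k' r)
                (G k jc * G k' jc)).symm
          _ = ∑ k, ∑ k', (G k jc * G k' jc) * (if k = k' then (N : ℝ) else 0) := by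
              exact Finset.sum_congr rfl fun k _ => Finset.sum_congr rfl fun k' _ => by
                rw [gram_inter hs hD hC hU hc k k']
          _ = (N : ℝ) * ∑ k, (G k jc) ^ 2 := by
              rw [Finset.mul_sum]
              refine Finset.sum_congr rfl fun k _ => ?_
              simp only [mul_ite, mul_zero]
              rw [Finset.sum_ite_eq (Finset.univ) k
                (fun k' => G k jc * G k' jc * (N : ℝ))]
              simp only [Finset.mem_univ, if_true]
              ring
      calc ∑ r, ((N : ℝ) * C c (D r c) jc - ∑ k, intCol C D (U.erase c) k r * G k jc) ^ 2
          = ∑ r, (((N : ℝ) * C c (D r c) jc) ^ 2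
              - 2 * (((N : ℝ) * C c (D r c) jc) * (∑ k, intCol C D (U.erase c) k r * G k jc))
              + (∑ k, intCol C D (U.erase c) k r * G k jc) ^ 2) := by
            exact Finset.sum_congr rfl fun r _ => by ring
        _ = (∑ r, ((N : ℝ) * C c (D r c) jc) ^ 2)
              - 2 * (∑ r, ((N : ℝ) * C c (D r c) jc) * (∑ k, intCol C D (U.erase c) k r * G k jc))
              + ∑ r, (∑ k, intCol C D (U.erase c) k r * G k jc) ^ 2 := by
            rw [Finset.sum_add_distrib, Finset.sum_sub_distrib, Finset.mul_sum]
        _ = (N : ℝ) ^ 3 - (N : ℝ) * ∑ k, (G k jc) ^ 2 := by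
            rw [hA, hAB, hB]; ring
    have hzero : ∑ jc : Fin (s c - 1),
        ∑ r, ((N : ℝ) * C c (D r c) jc - ∑ k, intCol C D (U.erase c) k r * G k jc) ^ 2 = 0 := by
      rw [Finset.sum_congr rfl fun jc _ => hper jc, Finset.sum_sub_distrib,
        ← Finset.mul_sum, hsum, Finset.sum_const, Finset.card_univ, Fintype.card_fin,
        nsmul_eq_mul]
      have hsc : ((s c - 1 : ℕ) : ℝ) = (s c : ℝ) - 1 := by
        have := hs c
        push_cast [Nat.cast_sub (by omega : 1 ≤ s c)]
        ring
      rw [hsc]; ring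
    intro r jc
    have h6 := (Finset.sum_eq_zero_iff_of_nonneg
      (fun jc _ => Finset.sum_nonneg fun r _ => sq_nonneg _)).1 hzero jc (Finset.mem_univ jc)
    have h7 := (Finset.sum_eq_zero_iff_of_nonneg (fun r _ => sq_nonneg _)).1 h6 r
      (Finset.mem_univ r)
    have h8 := pow_eq_zero_iff (n := 2) (by omega) |>.1 h7
    linarith [sub_eq_zero.1 h8]
  -- G has orthogonal columns of norm N
  have hGG : ∀ jc jc' : Fin (s c - 1),
      ∑ k, G k jc * G k jc' = if jc = jc' then (N : ℝ) ^ 2 else 0 := by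
    intro jc jc'
    calc ∑ k, G k jc * G k jc'
        = ∑ k, ∑ r, (intCol C D (U.erase c) k r * G k jc) * C c (D r c) jc' := by
          refine Finset.sum_congr rfl fun k _ => ?_
          have hgk : G k jc' = ∑ r, intCol C D (U.erase c) k r * C c (D r c) jc' := rfl
          rw [hgk, Finset.mul_sum]
          exact Finset.sum_congr rfl fun r _ => by ring
      _ = ∑ r, (∑ k, intCol C D (U.erase c) k r * G k jc) * C c (D r c) jc' := by
          rw [Finset.sum_comm]
          exact Finset.sum_congr rfl fun r _ => by rw [Finset.sum_mul]
      _ = (N : ℝ) * ∑ r, C c (D r c) jc * C c (D r c) jc' := by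
          rw [Finset.mul_sum]
          exact Finset.sum_congr rfl fun r _ => by rw [hkey r jc]; ring
      _ = if jc = jc' then (N : ℝ) ^ 2 else 0 := by
          rw [gram_main hR hs hD hC hU hc jc jc']
          split_ifs <;> ring
  -- an injection from the columns of X_c into columns of X_C
  have hcardJ : s c - 1 ≤ Fintype.card (∀ i : (U.erase c : Finset (Fin n)), Fin (s i.1 - 1)) := by
    have hcardJ' : Fintype.card (∀ i : (U.erase c : Finset (Fin n)), Fin (s i.1 - 1))
        = ∏ i ∈ U.erase c, (s i - 1) := by
      rw [Fintype.card_pi]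
      simp only [Fintype.card_fin]
      exact Finset.prod_coe_sort (U.erase c) (fun i => s i - 1)
    obtain ⟨c', hc'⟩ : (U.erase c).Nonempty := by
      rw [← Finset.card_pos, Finset.card_erase_of_mem hc, hU]; omega
    have h1 : s c' - 1 ≤ ∏ i ∈ U.erase c, (s i - 1) :=
      Finset.single_le_prod' (f := fun i => s i - 1)
        (fun i _ => by have := hs i; show 1 ≤ s i - 1; omega) hc'
    have h2 : s c - 1 ≤ s c' - 1 := by
      have := hmin c' (Finset.mem_of_mem_erase hc')
      omega
    omega
  obtain ⟨e0⟩ := Function.Embedding.nonempty_of_card_le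
    (by simpa [Fintype.card_fin] using hcardJ :
      Fintype.card (Fin (s c - 1)) ≤
        Fintype.card (∀ i : (U.erase c : Finset (Fin n)), Fin (s i.1 - 1)))
  -- the orthonormal family of normalized columns of G
  set v : (∀ i : (U.erase c : Finset (Fin n)), Fin (s i.1 - 1)) →
      EuclideanSpace ℝ (∀ i : (U.erase c : Finset (Fin n)), Fin (s i.1 - 1)) :=
    fun k0 => if h : ∃ jc, e0 jc = k0 then WithLp.toLp 2 (fun k => G k h.choose / N) else 0 with hv
  have hve : ∀ jc : Fin (s c - 1), v (e0 jc) = fun k => G k jc / N := by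
    intro jc
    have hex : ∃ a, e0 a = e0 jc := ⟨jc, rfl⟩
    rw [hv]
    simp only [dif_pos hex]
    have : hex.choose = jc := e0.injective hex.choose_spec
    rw [this]
  have hMorth : ∀ jc jc' : Fin (s c - 1),
      ∑ k, (G k jc / N) * (G k jc' / N) = if jc = jc' then (1 : ℝ) else 0 := by
    intro jc jc'
    have : ∀ k, (G k jc / N) * (G k jc' / N) = (G k jc * G k jc') / (N : ℝ) ^ 2 := by
      intro k; rw [div_mul_div_comm, ← pow_two]
    rw [Finset.sum_congr rfl fun k _ => this k, ← Finset.sum_div, hGG]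
    split_ifs
    · field_simp
    · simp
  have horth : Orthonormal ℝ ((Set.range e0).restrict v) := by
    rw [orthonormal_iff_ite]
    rintro ⟨x, a, hax⟩ ⟨y, b, hby⟩
    have h1 : (Set.range e0).restrict v ⟨x, a, hax⟩ = fun k => G k a / N := by
      show (v x).ofLp = _; rw [← hax]; exact hve a
    have h2 : (Set.range e0).restrict v ⟨y, b, hby⟩ = fun k => G k b / N := by
      show (v y).ofLp = _; rw [← hby]; exact hve b
    rw [PiLp.inner_apply]; simp only [h1, h2]
    simp only [RCLike.inner_apply, starRingEnd_apply, star_trivial]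
    rw [Finset.sum_congr rfl fun k _ => mul_comm (G k b / N) (G k a / N), hMorth a b]
    have hiff : ((⟨x, a, hax⟩ : Set.range e0) = ⟨y, b, hby⟩) ↔ a = b := by
      constructor
      · intro h
        apply e0.injective
        rw [hax, hby]
        exact congrArg Subtype.val h
      · intro h
        apply Subtype.ext
        show x = y
        rw [← hax, ← hby, h]
    by_cases hab : a = b
    · rw [if_pos hab, if_pos (hiff.2 hab)]
    · rw [if_neg hab, if_neg (fun hteq => hab (hiff.1 hteq))]
  obtain ⟨b, hb⟩ := horth.exists_orthonormalBasis_extension_of_card_eq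
    (finrank_euclideanSpace)
  refine ⟨Matrix.of (fun k k' => b k' k), ?_, fun jc => e0 jc, e0.injective, ?_⟩
  · ext a a'
    rw [Matrix.mul_apply, Matrix.one_apply]
    have h1 : ∑ k, (Matrix.of (fun k k' => b k' k))ᵀ a k * (Matrix.of (fun k k' => b k' k)) k a'
        = ∑ k, b a k * b a' k := by
      exact Finset.sum_congr rfl fun k _ => by simp [Matrix.transpose_apply]
    rw [h1]
    have h2 := orthonormal_iff_ite.1 b.orthonormal a a'
    rw [PiLp.inner_apply] at h2
    simp only [RCLike.inner_apply, starRingEnd_apply, star_trivial] at h2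
    rw [← h2]; exact Finset.sum_congr rfl fun k _ => mul_comm _ _
  · intro j r
    rw [Matrix.mul_apply]
    have h1 : ∀ k, (Matrix.of fun r' k => intCol C D (U.erase c) k r') r k *
        (Matrix.of (fun k k' => b k' k)) k (e0 j)
        = intCol C D (U.erase c) k r * (G k j / N) := by
      intro k
      have hbe : b (e0 j) = v (e0 j) := hb (e0 j) ⟨j, rfl⟩
      simp only [Matrix.of_apply]
      rw [hbe, hve j]
    rw [Finset.sum_congr rfl fun k _ => h1 k]
    have h2 : ∑ k, intCol C D (U.erase c) k r * (G k j / N)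
        = (∑ k, intCol C D (U.erase c) k r * G k j) / N := by
      rw [Finset.sum_div]
      exact Finset.sum_congr rfl fun k _ => by ring
    rw [h2, hkey r j]
    exact mul_div_cancel_left₀ _ hNR
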